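/- Let G be a simple graph containing four distinct vertices u, v, w_1, w_2 such that uv, uw_1, vw_1, uw_2, vw_2 are all edges of G (so uvw_1 and uvw_2 are triangles sharing the edge uv). Let G' be the graph obtained from G by deleting the edge uv, adding a new vertex z, and adding the edges uz, zv, zw_1, zw_2 (i.e., G' is obtained by subdividing the edge uv with z and joining z to w_1 and w_2). If G' is 2-edge-hamiltonian-connected, then G is hamiltonian-connected. -/

import Mathlib

open SimpleGraph

/-- The graph `G'` obtained from `G` by deleting the edge `uv`, adding a new
vertex `z` (here `none : Option V`) and adding the edges `uz`, `zv`, `zw₁`, `zw₂`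
(i.e. subdividing the edge `uv` with `z` and joining `z` to `w₁` and `w₂`). -/
def subdivideEdge {V : Type*} (G : SimpleGraph V) (u v w₁ w₂ : V) :
    SimpleGraph (Option V) where
  Adj a b := match a, b with
    | some a, some b => G.Adj a b ∧ ¬(a = u ∧ b = v) ∧ ¬(a = v ∧ b = u)
    | some a, none => a = u ∨ a = v ∨ a = w₁ ∨ a = w₂
    | none, some b => b = u ∨ b = v ∨ b = w₁ ∨ b = w₂
    | none, none => False
  symm := by
    constructor
    rintro (_ | a) (_ | b) h
    · exact h
    · exact h
    · exact h
    · exact ⟨h.1.symm, fun hc => h.2.2 ⟨hc.2, hc.1⟩, fun hc => h.2.1 ⟨hc.2, hc.1⟩⟩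
  loopless := by
    constructor
    rintro (_ | a) h
    · exact h
    · exact G.irrefl h.1

/-- A graph is hamiltonian-connected if every pair of distinct vertices is joined
by a Hamiltonian path. -/
def HamiltonianConnected {V : Type*} [DecidableEq V] (G : SimpleGraph V) : Prop :=
  ∀ x y : V, x ≠ y → ∃ p : G.Walk x y, p.IsHamiltonian

/-- A graph `H` is 2-edge-hamiltonian-connected if for every nonempty set `X` of
at most 2 edges (pairs of distinct vertices of `H`) such that the graph induced
by `X` on the vertices of `H` is a forest each of whose components is a path
(equivalently: acyclic with all degrees at most 2), the graph `H ∪ X` has a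
Hamiltonian cycle containing all edges of `X`. -/
def TwoEdgeHamiltonianConnected {W : Type*} [DecidableEq W] (H : SimpleGraph W) : Prop :=
  ∀ X : Finset (Sym2 W), (∀ e ∈ X, ¬ e.IsDiag) → 1 ≤ X.card → X.card ≤ 2 →
    (fromEdgeSet (↑X : Set (Sym2 W))).IsAcyclic →
    (∀ w : W, ((fromEdgeSet (↑X : Set (Sym2 W))).neighborSet w).ncard ≤ 2) →
    ∃ (a : W) (C : (H ⊔ fromEdgeSet (↑X : Set (Sym2 W))).Walk a a),
      C.IsHamiltonianCycle ∧ ∀ e ∈ X, e ∈ C.edges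

section Helpers
open SimpleGraph Walk
variable {α : Type*}

private lemma first_edge_cons {G : SimpleGraph α} {x y c : α} (hxy : x ≠ y)
    (q : G.Walk x c) (hq : q.IsPath) (he : s(x, y) ∈ q.edges) :
    ∃ (h : G.Adj x y) (q' : G.Walk y c), q = Walk.cons h q' := by
  cases q with
  | nil => simp at he
  | cons h' q'' =>
    rename_i d
    rw [Walk.edges_cons, List.mem_cons] at he
    rcases he with he | he
    · rw [Sym2.eq_iff] at he
      rcases he with ⟨-, hd⟩ | ⟨-, hyx⟩
      · subst hd; exact ⟨h', q'', rfl⟩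
      · exact absurd hyx.symm hxy
    · exact absurd (q''.fst_mem_support_of_mem_edges he)
        ((Walk.cons_isPath_iff h' q'').mp hq).2

private lemma pull_down {H : SimpleGraph (Option α)} {K : SimpleGraph α}
    (hHK : ∀ a b : α, H.Adj (some a) (some b) → K.Adj a b) :
    ∀ {s t : Option α} (p : H.Walk s t), none ∉ p.support →
    ∃ (a b : α) (P : K.Walk a b), s = some a ∧ t = some b ∧
      P.support.map some = p.support ∧ P.edges.map (Sym2.map some) = p.edges := by
  intro s t p
  induction p with
  | nil =>
    rename_i s0
    intro hs
    rw [Walk.support_nil, List.mem_singleton] at hs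
    cases s0 with
    | none => exact absurd rfl hs
    | some a => exact ⟨a, a, Walk.nil, rfl, rfl, by simp, by simp⟩
  | cons h p' ih =>
    intro hns
    rw [Walk.support_cons, List.mem_cons] at hns
    push_neg at hns
    obtain ⟨hns1, hns2⟩ := hns
    obtain ⟨a', b', P', hm, ht, hsup, hedg⟩ := ih hns2
    subst hm; subst ht
    rename_i s'
    cases s' with
    | none => exact absurd rfl hns1
    | some a₀ =>
      refine ⟨a₀, b', Walk.cons (hHK _ _ h) P', rfl, rfl, ?_, ?_⟩
      · simp [hsup]
      · simp [hedg]

private lemma ham_rotate [DecidableEq α] {G : SimpleGraph α} {a b : α} {c : G.Walk a a}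
    (hc : c.IsHamiltonianCycle) (h : b ∈ c.support) : (c.rotate b h).IsHamiltonianCycle := by
  rw [Walk.isHamiltonianCycle_iff_isCycle_and_support_count_tail_eq_one] at hc ⊢
  exact ⟨hc.1.rotate h, fun x => ((Walk.support_rotate c b h).perm.count_eq x).trans (hc.2 x)⟩

private lemma ham_reverse [DecidableEq α] {G : SimpleGraph α} {a : α} {c : G.Walk a a}
    (hc : c.IsHamiltonianCycle) : c.reverse.IsHamiltonianCycle := by
  rw [Walk.isHamiltonianCycle_iff_isCycle_and_support_count_tail_eq_one] at hc ⊢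
  obtain ⟨hcyc, hcount⟩ := hc
  have hlen := hcyc.three_le_length
  have hcount' : ∀ x, c.reverse.support.tail.count x = 1 := by
    intro x
    have e1 : (a :: c.reverse.support.tail).count x = (a :: c.support.tail).count x := by
      conv_lhs => rw [← Walk.support_eq_cons]
      conv_rhs => rw [← Walk.support_eq_cons]
      rw [Walk.support_reverse, List.count_reverse]
    simp only [List.count_cons] at e1
    have := hcount x
    omega
  refine ⟨(Walk.isCycle_def _).mpr ⟨(Walk.reverse_isTrail_iff c).mpr hcyc.isTrail, ?_, ?_⟩, ?_⟩
  · intro hn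
    have : c.reverse.length = 0 := by rw [hn]; rfl
    rw [Walk.length_reverse] at this; omega
  · exact List.nodup_iff_count_le_one.mpr fun x => le_of_eq (hcount' x)
  · exact hcount'


private lemma count_bridge {γ : Type*} [DecidableEq γ] (x : Option γ) (l : List (Option γ)) :
    @List.count (Option γ) instBEqOfDecidableEq x l = l.count x := by
  induction l with
  | nil => rfl
  | cons b l ih =>
    rw [@List.count_cons _ instBEqOfDecidableEq, List.count_cons, ih]
    congr 1
    by_cases h : x = b
    · subst h; simp
    · simp [h]

private lemma extract_core [DecidableEq α] {H : SimpleGraph (Option α)} {u : α}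
    {rest : H.Walk (some u) (none : Option α)} {h₀ : H.Adj none (some u)}
    (hC : (Walk.cons h₀ rest).IsHamiltonianCycle) :
    ∃ (e : Option α) (Q : H.Walk e (some u)),
      H.Adj none e ∧ e ≠ some u ∧ (none ∉ Q.support) ∧
      (∀ w : α, Q.support.count (some w) = 1) ∧
      (∀ e' ∈ (Walk.cons h₀ rest).edges, none ∈ e' ∨ e' ∈ Q.edges) := by
  have hcount : ∀ x, (Walk.cons h₀ rest).support.tail.count x = 1 := fun x =>
    (count_bridge x _).symm.trans
      ((Walk.isHamiltonianCycle_iff_isCycle_and_support_count_tail_eq_one.mp hC).2 x)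
  have hrest : rest.IsPath ∧ s((none : Option α), some u) ∉ rest.edges :=
    (Walk.cons_isCycle_iff rest h₀).mp hC.isCycle
  obtain ⟨e, h₂, pre, hre⟩ :=
    Walk.exists_eq_cons_of_ne (by simp : (none : Option α) ≠ some u) rest.reverse
  have hrevedges : rest.reverse.edges = s((none : Option α), e) :: pre.edges := by
    rw [hre, Walk.edges_cons]
  have key : ∀ x : Option α, (none :: pre.support).count x = 1 := by
    intro x
    have h4 := hcount x
    rw [Walk.support_cons, List.tail_cons] at h4
    have h5 : rest.support.reverse = none :: pre.support := by
      rw [← Walk.support_reverse, hre, Walk.support_cons]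
    rw [← h5, List.count_reverse]
    exact h4
  refine ⟨e, pre, h₂, ?_, ?_, ?_, ?_⟩
  · rintro rfl
    apply hrest.2
    rw [← List.mem_reverse, ← Walk.edges_reverse, hrevedges]
    exact List.mem_cons_self
  · have := key none
    simp only [List.count_cons_self] at this
    exact List.count_eq_zero.mp (by omega)
  · intro w
    have := key (some w)
    rw [List.count_cons] at this
    simpa using this
  · intro e' he'
    rw [Walk.edges_cons, List.mem_cons] at he'
    rcases he' with rfl | he'
    · left; simp
    · rw [← List.mem_reverse, ← Walk.edges_reverse, hrevedges, List.mem_cons] at he'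
      rcases he' with rfl | he'
      · left; simp
      · right; exact he'

private lemma extract_lemma [DecidableEq α] {H : SimpleGraph (Option α)} {u : α}
    (C : H.Walk (none : Option α) none) (hC : C.IsHamiltonianCycle)
    (hzu : s((none : Option α), some u) ∈ C.edges) :
    ∃ (e : Option α) (Q : H.Walk e (some u)),
      H.Adj none e ∧ e ≠ some u ∧ (none ∉ Q.support) ∧
      (∀ w : α, Q.support.count (some w) = 1) ∧
      (∀ e' ∈ C.edges, none ∈ e' ∨ e' ∈ Q.edges) := by
  cases C with
  | nil => exact absurd rfl hC.isCycle.ne_nil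
  | cons h₀ rest₀ =>
    rename_i d₀
    rw [Walk.edges_cons, List.mem_cons] at hzu
    rcases hzu with hzu | hzu
    · have hd : d₀ = some u := by
        rw [Sym2.eq_iff] at hzu
        rcases hzu with ⟨-, hd⟩ | ⟨-, h1⟩
        · exact hd.symm
        · simp at h1
      subst hd
      exact extract_core hC
    · have hrp : rest₀.IsPath := ((Walk.cons_isCycle_iff rest₀ h₀).mp hC.isCycle).1
      have he' : s((none : Option α), some u) ∈ rest₀.reverse.edges := by
        rw [Walk.edges_reverse, List.mem_reverse]; exact hzu
      obtain ⟨hadj, r', hr⟩ :=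
        first_edge_cons (by simp : (none : Option α) ≠ some u) rest₀.reverse hrp.reverse he'
      have hCrev : (Walk.cons h₀ rest₀).reverse
          = Walk.cons hadj (r'.append (Walk.cons h₀.symm Walk.nil)) := by
        rw [Walk.reverse_cons, hr, Walk.cons_append]
      have hrev_ham := ham_reverse hC
      rw [hCrev] at hrev_ham
      obtain ⟨e, Q, hQ1, hQ2, hQ3, hQ4, hQ5⟩ := extract_core hrev_ham
      refine ⟨e, Q, hQ1, hQ2, hQ3, hQ4, ?_⟩
      intro e' he''
      apply hQ5
      rw [← hCrev, Walk.edges_reverse, List.mem_reverse]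
      exact he''

private lemma ham_path_core [DecidableEq α] {G K : SimpleGraph α} {x y b u : α} (hxy : x ≠ y)
    (P : K.Walk b u) (hham : ∀ w, P.support.count w = 1)
    (hedges : ∀ e ∈ P.edges, e = s(x, y) ∨ e ∈ G.edgeSet)
    (hexy : s(x, y) ∈ P.edges) (hub : G.Adj u b) :
    ∃ R : G.Walk x y, R.IsHamiltonian := by
  have hPpath : P.IsPath :=
    Walk.IsPath.mk' (List.nodup_iff_count_le_one.mpr fun w => le_of_eq (hham w))
  have hPnodup : P.edges.Nodup := hPpath.isTrail.edges_nodup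
  have hx : x ∈ P.support := P.fst_mem_support_of_mem_edges hexy
  have hspec : (P.takeUntil x hx).append (P.dropUntil x hx) = P := P.take_spec hx
  set t := P.takeUntil x hx with ht_def
  set q := P.dropUntil x hx with hq_def
  have htp : t.IsPath := hPpath.takeUntil hx
  have hqp : q.IsPath := hPpath.dropUntil hx
  have hPedges : P.edges = t.edges ++ q.edges := by rw [← hspec, Walk.edges_append]
  have hPsupp : ∀ w, t.support.count w + q.support.tail.count w = 1 := by
    intro w
    rw [← List.count_append, ← Walk.support_append, hspec]
    exact hham w
  rw [hPedges] at hPnodup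
  have hdisj := (List.nodup_append.mp hPnodup).2.2
  rcases List.mem_append.mp (hPedges ▸ hexy) with hmem | hmem
  · -- edge s(x,y) inside t : Walk b x
    have hmem' : s(x, y) ∈ t.reverse.edges := by
      rw [Walk.edges_reverse, List.mem_reverse]; exact hmem
    obtain ⟨hadj, s', hs⟩ := first_edge_cons hxy t.reverse htp.reverse hmem'
    have hrevedges : t.reverse.edges = s(x, y) :: s'.edges := by rw [hs, Walk.edges_cons]
    have hs'nodup : s(x, y) ∉ s'.edges := by
      have := htp.reverse.isTrail.edges_nodup
      rw [hrevedges, List.nodup_cons] at this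
      exact this.1
    have hs'G : ∀ e ∈ s'.edges, e ∈ G.edgeSet := by
      intro e hee
      have h1 : e ∈ t.edges := by
        rw [← List.mem_reverse, ← Walk.edges_reverse, hrevedges]
        exact List.mem_cons_of_mem _ hee
      rcases hedges e (by rw [hPedges]; exact List.mem_append_left _ h1) with rfl | h
      · exact absurd hee hs'nodup
      · exact h
    have hqG : ∀ e ∈ q.edges, e ∈ G.edgeSet := by
      intro e hee
      rcases hedges e (by rw [hPedges]; exact List.mem_append_right _ hee) with rfl | h
      · exact absurd rfl (hdisj _ hmem _ hee)
      · exact h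
    refine ⟨((s'.transfer G hs'G).append
      (Walk.cons hub.symm (q.transfer G hqG).reverse)).reverse, ?_⟩
    intro w
    rw [Walk.support_reverse, List.count_reverse, Walk.support_append,
      List.count_append, Walk.support_cons, List.tail_cons, Walk.support_reverse,
      List.count_reverse, Walk.support_transfer, Walk.support_transfer]
    have h8 := hPsupp w
    have h9 : t.support.count w = (x :: s'.support).count w := by
      rw [← List.count_reverse, ← Walk.support_reverse, hs, Walk.support_cons]
    have h10 : q.support.count w = (x :: q.support.tail).count w := by
      conv_lhs => rw [Walk.support_eq_cons q]
    by_cases hwx : w = x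
    · subst hwx
      rw [List.count_cons_self] at h9 h10
      omega
    · rw [List.count_cons_of_ne (Ne.symm hwx)] at h9 h10
      omega
  · -- edge s(x,y) inside q : Walk x u
    obtain ⟨hadj, q', hqc⟩ := first_edge_cons hxy q hqp hmem
    have hqedges : q.edges = s(x, y) :: q'.edges := by rw [hqc, Walk.edges_cons]
    have hq'nodup : s(x, y) ∉ q'.edges := by
      have := hqp.isTrail.edges_nodup
      rw [hqedges, List.nodup_cons] at this
      exact this.1
    have hq'G : ∀ e ∈ q'.edges, e ∈ G.edgeSet := by
      intro e hee
      have h1 : e ∈ q.edges := by rw [hqedges]; exact List.mem_cons_of_mem _ hee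
      rcases hedges e (by rw [hPedges]; exact List.mem_append_right _ h1) with rfl | h
      · exact absurd hee hq'nodup
      · exact h
    have htG : ∀ e ∈ t.edges, e ∈ G.edgeSet := by
      intro e hee
      rcases hedges e (by rw [hPedges]; exact List.mem_append_left _ hee) with rfl | h
      · exact absurd rfl (hdisj _ hee _ hmem)
      · exact h
    refine ⟨((q'.transfer G hq'G).append (Walk.cons hub (t.transfer G htG))).reverse, ?_⟩
    intro w
    rw [Walk.support_reverse, List.count_reverse, Walk.support_append,
      List.count_append, Walk.support_cons, List.tail_cons, Walk.support_transfer,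
      Walk.support_transfer]
    have h8 := hPsupp w
    have h7 : q.support.tail = q'.support := by rw [hqc, Walk.support_cons, List.tail_cons]
    rw [h7] at h8
    omega

end Helpers

private lemma subdiv_some_some {V : Type*} {G : SimpleGraph V} {u v w₁ w₂ a b : V}
    (h : (subdivideEdge G u v w₁ w₂).Adj (some a) (some b)) : G.Adj a b := h.1

private lemma subdiv_none_some {V : Type*} {G : SimpleGraph V} {u v w₁ w₂ a : V}
    (h : (subdivideEdge G u v w₁ w₂).Adj none (some a)) :
    a = u ∨ a = v ∨ a = w₁ ∨ a = w₂ := h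


/-- if `G` contains two triangles `u v w₁` and `u v w₂` sharing the
edge `uv`, and the graph `G'` obtained by subdividing `uv` with a new vertex `z`
and joining `z` to `w₁` and `w₂` is 2-edge-hamiltonian-connected, then `G` is
hamiltonian-connected. -/
theorem stmt_3 {V : Type*} [DecidableEq V] (G : SimpleGraph V) (u v w₁ w₂ : V)
    (hdist : [u, v, w₁, w₂].Nodup)
    (huv : G.Adj u v) (huw₁ : G.Adj u w₁) (hvw₁ : G.Adj v w₁)
    (huw₂ : G.Adj u w₂) (hvw₂ : G.Adj v w₂)
    (hG' : TwoEdgeHamiltonianConnected (subdivideEdge G u v w₁ w₂)) :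
    HamiltonianConnected G := by
  intro x y hxyne
  classical
  set X : Finset (Sym2 (Option V)) :=
    {s(some x, some y), s((none : Option V), some u)} with hXdef
  have hmem1 : s((some x : Option V), some y) ∈ X := by simp [hXdef]
  have hmem2 : s((none : Option V), some u) ∈ X := by simp [hXdef]
  have hne12 : (s((some x : Option V), some y)) ≠ s((none : Option V), some u) := by
    simp [Sym2.eq_iff]
  have hcard : X.card = 2 := by
    rw [hXdef, Finset.card_insert_of_notMem (by simpa using hne12), Finset.card_singleton]
  have hdiag : ∀ e ∈ X, ¬e.IsDiag := by
    intro e he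
    rw [hXdef, Finset.mem_insert, Finset.mem_singleton] at he
    rcases he with rfl | rfl
    · simp only [Sym2.isDiag_iff_proj_eq, Option.some.injEq]
      exact hxyne
    · simp
  have hacyc : (fromEdgeSet (↑X : Set (Sym2 (Option V)))).IsAcyclic := by
    intro w c hc
    have h3 := hc.three_le_length
    have hnodup : c.edges.Nodup := hc.isCircuit.isTrail.edges_nodup
    have hsub : c.edges.toFinset ⊆ X := by
      intro e he
      rw [List.mem_toFinset] at he
      have h4 := c.edges_subset_edgeSet he
      rw [edgeSet_fromEdgeSet] at h4
      exact Finset.mem_coe.mp h4.1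
    have h5 := Finset.card_le_card hsub
    rw [List.toFinset_card_of_nodup hnodup, Walk.length_edges, hcard] at h5
    omega
  have hdeg : ∀ w : Option V,
      ((fromEdgeSet (↑X : Set (Sym2 (Option V)))).neighborSet w).ncard ≤ 2 := by
    intro w
    have hsub : (fromEdgeSet (↑X : Set (Sym2 (Option V)))).neighborSet w ⊆
        {(if w = some x then some y else some x), (if w = none then some u else none)} := by
      intro b hb
      rw [mem_neighborSet, fromEdgeSet_adj] at hb
      obtain ⟨hbX, hwb⟩ := hb
      rw [Finset.mem_coe, hXdef, Finset.mem_insert, Finset.mem_singleton] at hbX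
      simp only [Set.mem_insert_iff, Set.mem_singleton_iff]
      rcases hbX with hb1 | hb1 <;> rw [Sym2.eq_iff] at hb1
      · rcases hb1 with ⟨rfl, rfl⟩ | ⟨rfl, rfl⟩
        · left; rw [if_pos rfl]
        · left
          rw [if_neg (by simp only [Option.some.injEq]; exact fun h => hxyne h.symm)]
      · rcases hb1 with ⟨rfl, rfl⟩ | ⟨rfl, rfl⟩
        · right; rw [if_pos rfl]
        · right; rw [if_neg (by simp)]
    refine le_trans (Set.ncard_le_ncard hsub (Set.toFinite _)) ?_
    refine le_trans (Set.ncard_insert_le _ _) ?_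
    simp
  obtain ⟨a, C, hC, hXC⟩ := hG' X hdiag (by omega) (by omega) hacyc hdeg
  have hzu : s((none : Option V), some u) ∈ C.edges := hXC _ hmem2
  have hxyC : s((some x : Option V), some y) ∈ C.edges := hXC _ hmem1
  have hnoneC : none ∈ C.support := hC.mem_support _
  have hC₀ : (C.rotate none hnoneC).IsHamiltonianCycle := ham_rotate hC hnoneC
  have hzu₀ : s((none : Option V), some u) ∈ (C.rotate none hnoneC).edges :=
    ((C.rotate_edges none hnoneC).perm.mem_iff).mpr hzu
  have hxy₀ : s((some x : Option V), some y) ∈ (C.rotate none hnoneC).edges :=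
    ((C.rotate_edges none hnoneC).perm.mem_iff).mpr hxyC
  obtain ⟨e, Q, hQadj, hQne, hQnone, hQcount, hQcover⟩ := extract_lemma _ hC₀ hzu₀
  have hxyQ : s((some x : Option V), some y) ∈ Q.edges := by
    rcases hQcover _ hxy₀ with hmem | hmem
    · rw [Sym2.mem_iff] at hmem
      rcases hmem with h | h <;> simp at h
    · exact hmem
  set K : SimpleGraph V := G ⊔ fromEdgeSet {s(x, y)} with hKdef
  have hHK : ∀ a b : V,
      (subdivideEdge G u v w₁ w₂ ⊔ fromEdgeSet (↑X : Set (Sym2 (Option V)))).Adj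
        (some a) (some b) → K.Adj a b := by
    intro a b hab
    rw [sup_adj] at hab
    rw [hKdef, sup_adj]
    rcases hab with hab | hab
    · exact Or.inl (subdiv_some_some hab)
    · rw [fromEdgeSet_adj] at hab
      obtain ⟨habX, habne⟩ := hab
      rw [Finset.mem_coe, hXdef, Finset.mem_insert, Finset.mem_singleton] at habX
      have habne' : a ≠ b := fun h => habne (by rw [h])
      rcases habX with h | h <;> rw [Sym2.eq_iff] at h
      · right
        rw [fromEdgeSet_adj]
        refine ⟨?_, habne'⟩
        rcases h with ⟨h1, h2⟩ | ⟨h1, h2⟩ <;>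
          rw [Option.some.injEq] at h1 h2 <;> subst h1 <;> subst h2
        · rfl
        · rw [Set.mem_singleton_iff, Sym2.eq_iff]
          right; exact ⟨rfl, rfl⟩
      · exfalso
        rcases h with ⟨h1, -⟩ | ⟨-, h2⟩
        · exact nomatch h1
        · exact nomatch h2
  obtain ⟨a', b', P, hea, hub', hsupmap, hedgmap⟩ := pull_down hHK Q hQnone
  obtain rfl : u = b' := Option.some.inj hub'
  subst hea
  have hGua : G.Adj u a' := by
    rw [sup_adj] at hQadj
    rcases hQadj with h | h
    · rcases subdiv_none_some h with rfl | rfl | rfl | rfl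
      · exact absurd rfl hQne
      · exact huv
      · exact huw₁
      · exact huw₂
    · rw [fromEdgeSet_adj] at h
      obtain ⟨hX', -⟩ := h
      rw [Finset.mem_coe, hXdef, Finset.mem_insert, Finset.mem_singleton] at hX'
      exfalso
      rcases hX' with h | h <;> rw [Sym2.eq_iff] at h
      · rcases h with ⟨h1, -⟩ | ⟨h1, -⟩
        · exact nomatch h1
        · exact nomatch h1
      · rcases h with ⟨-, h2⟩ | ⟨-, h2⟩
        · exact hQne h2
        · exact nomatch h2
  have hPcount : ∀ w : V, P.support.count w = 1 := by
    intro w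
    have h1 := hQcount w
    rw [← hsupmap, ← count_bridge] at h1
    exact (List.count_map_of_injective _ some (Option.some_injective V) w).symm.trans
      ((count_bridge _ _).symm.trans h1)
  have hPedgecond : ∀ e'' ∈ P.edges, e'' = s(x, y) ∨ e'' ∈ G.edgeSet := by
    intro e'' he
    have h1 := P.edges_subset_edgeSet he
    rw [hKdef, edgeSet_sup] at h1
    rcases h1 with h1 | h1
    · exact Or.inr h1
    · rw [edgeSet_fromEdgeSet] at h1
      exact Or.inl (Set.mem_singleton_iff.mp h1.1)
  have hPxy : s(x, y) ∈ P.edges := by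
    have h1 : Sym2.map some s(x, y) ∈ P.edges.map (Sym2.map some) := by
      rw [hedgmap]
      simpa using hxyQ
    obtain ⟨e₀, he₀, heq⟩ := List.mem_map.mp h1
    have he₀' : e₀ = s(x, y) := Sym2.map.injective (Option.some_injective V) heq
    rwa [← he₀']
  exact ham_path_core hxyne P hPcount hPedgecond hPxy hGua
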